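/- For all λ, τ ∈ ℂ with sinh(λ/2) ≠ 0 and cosh(λ/2) ≠ 0, the matrix T(λ,τ) is invertible (it has determinant 1) and satisfies the gluing relation T(λ,τ)⁻¹ · S(λ) · T(λ,τ) = S'(λ). -/

import Mathlib

open Matrix

/-- `S(λ) = [[cosh λ, cosh λ + 1; cosh λ − 1, cosh λ]]` -/
noncomputable def Smat (l : ℂ) : Matrix (Fin 2) (Fin 2) ℂ :=
  !![Complex.cosh l, Complex.cosh l + 1; Complex.cosh l - 1, Complex.cosh l]

/-- `S'(λ) = [[cosh λ, cosh λ − 1], [cosh λ + 1, cosh λ]]` -/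
noncomputable def Smat' (l : ℂ) : Matrix (Fin 2) (Fin 2) ℂ :=
  !![Complex.cosh l, Complex.cosh l - 1; Complex.cosh l + 1, Complex.cosh l]

/-- `T(λ,τ) = [[cosh(τ/2)·coth(λ/2), −sinh(τ/2)], [−sinh(τ/2), cosh(τ/2)·tanh(λ/2)]]` -/
noncomputable def Tmat (l τ : ℂ) : Matrix (Fin 2) (Fin 2) ℂ :=
  !![Complex.cosh (τ/2) * (Complex.cosh (l/2) / Complex.sinh (l/2)), -Complex.sinh (τ/2);
     -Complex.sinh (τ/2), Complex.cosh (τ/2) * (Complex.sinh (l/2) / Complex.cosh (l/2))]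

theorem gluing_relation (l τ : ℂ) (h1 : Complex.sinh (l/2) ≠ 0)
    (h2 : Complex.cosh (l/2) ≠ 0) :
    (Tmat l τ).det = 1 ∧ (Tmat l τ)⁻¹ * Smat l * Tmat l τ = Smat' l := by
  have hτ : Complex.cosh (τ/2) ^ 2 - Complex.sinh (τ/2) ^ 2 = 1 :=
    Complex.cosh_sq_sub_sinh_sq _
  have hl2 : Complex.cosh (l/2) ^ 2 - Complex.sinh (l/2) ^ 2 = 1 :=
    Complex.cosh_sq_sub_sinh_sq _
  have hl : Complex.cosh l = 2 * Complex.cosh (l/2) ^ 2 - 1 := by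
    have h := Complex.cosh_two_mul (l/2)
    rw [show 2*(l/2)=l by ring] at h
    linear_combination h - hl2
  have hdet : (Tmat l τ).det = 1 := by
    simp only [Tmat, Matrix.det_fin_two_of]
    field_simp
    linear_combination hτ
  refine ⟨hdet, ?_⟩
  have hST : Smat l * Tmat l τ = Tmat l τ * Smat' l := by
    ext i j
    fin_cases i <;> fin_cases j <;>
      simp [Smat, Smat', Tmat, Matrix.mul_apply, Fin.sum_univ_two, hl] <;>
      field_simp <;>
      first
        | ring1
        | linear_combination (2 * Complex.cosh (τ/2) * Complex.cosh (l/2) ^ 2) * hl2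
        | linear_combination (-(2 * Complex.cosh (τ/2) * Complex.cosh (l/2) ^ 2)) * hl2
        | linear_combination (-(2 * Complex.cosh (τ/2) * Complex.cosh (l/2))) * hl2
        | linear_combination (2 * Complex.cosh (τ/2) * Complex.cosh (l/2)) * hl2
  have hu : IsUnit (Tmat l τ).det := by rw [hdet]; exact isUnit_one
  rw [Matrix.mul_assoc, hST, ← Matrix.mul_assoc, Matrix.nonsing_inv_mul _ hu,
    Matrix.one_mul]
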